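/- The MS-UKF estimated mean of an affine-plus-quadratic function matches the true mean through second order: if f(x) = F x + (x−μ)ᵀ M (x−μ) · e (for a fixed direction e) and the sigma points satisfy the three moment conditions (weights sum to 1, first moment 0, second moment P), then the sigma-point weighted mean Σ w_i^m f(μ + δ_i) equals F μ + trace(M P) · e, which is the exact mean E[f(x)] for any x with mean μ and covariance P. -/

import Mathlib

/-- The MS-UKF estimated mean of an affine-plus-quadratic function matches the
true mean through second order. -/
theorem msukf_mean_affine_quadratic_exact (n : ℕ) (hn : 0 < n)
    (F M : Matrix (Fin n) (Fin n) ℝ) (hM : M.IsSymm) (e μ : Fin n → ℝ)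
    (f : (Fin n → ℝ) → (Fin n → ℝ))
    (hf : ∀ x, f x = F.mulVec x + (dotProduct (x - μ) (M.mulVec (x - μ))) • e)
    (δ : ℕ → (Fin n → ℝ)) (w : ℕ → ℝ) (P : Matrix (Fin n) (Fin n) ℝ)
    (hw : ∑ i ∈ Finset.range (2 * n + 1), w i = 1)
    (hδ1 : ∑ i ∈ Finset.range (2 * n + 1), w i • δ i = 0)
    (hδ2 : ∑ i ∈ Finset.range (2 * n + 1), w i • Matrix.vecMulVec (δ i) (δ i) = P) :
    ∑ i ∈ Finset.range (2 * n + 1), w i • f (μ + δ i) =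
      F.mulVec μ + (M * P).trace • e := by
  have key : ∀ v : Fin n → ℝ,
      dotProduct v (M.mulVec v) = (M * Matrix.vecMulVec v v).trace := by
    intro v
    simp only [Matrix.trace, Matrix.diag, Matrix.mul_apply, Matrix.vecMulVec_apply,
      dotProduct, Matrix.mulVec, Finset.mul_sum]
    refine Finset.sum_congr rfl fun i _ => Finset.sum_congr rfl fun k _ => by ring
  have step : ∑ i ∈ Finset.range (2 * n + 1), w i • f (μ + δ i) =
      ∑ i ∈ Finset.range (2 * n + 1),
        (w i • F.mulVec μ + F.mulVec (w i • δ i)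
          + (w i • (M * Matrix.vecMulVec (δ i) (δ i))).trace • e) := by
    refine Finset.sum_congr rfl fun i _ => ?_
    rw [hf, Matrix.mulVec_add, add_sub_cancel_left, key, Matrix.mulVec_smul,
      Matrix.trace_smul]
    simp [smul_add, smul_smul]
  rw [step, Finset.sum_add_distrib, Finset.sum_add_distrib, ← Finset.sum_smul, hw,
    one_smul, ← Finset.sum_smul, ← Matrix.trace_sum]
  simp only [← Matrix.mul_smul, ← Matrix.mul_sum, hδ2]
  simp only [← F.mulVecLin_apply]
  rw [← map_sum, hδ1]
  simp
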